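/- Let X₁ and X₂ be independent random variables with the logistic distribution (density f(x) = (e^{x/2} + e^{-x/2})^{-2}). Then the function h(x) := P(X₁ + X₂ > x), restricted to 0 ≤ x < ∞, is itself a probability density function on [0,∞), i.e., ∫_0^∞ P(X₁ + X₂ > x) dx = 1. -/

import Mathlib

open MeasureTheory ProbabilityTheory

/-- The logistic distribution on ℝ, with density `(e^{x/2}+e^{-x/2})⁻²`. -/
noncomputable def logisticMeasure : Measure ℝ :=
  volume.withDensity fun x => ENNReal.ofReal ((Real.exp (x / 2) + Real.exp (-x / 2)) ^ 2)⁻¹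

open Real Filter Set

noncomputable def gden (y : ℝ) : ℝ := ((Real.exp (y / 2) + Real.exp (-y / 2)) ^ 2)⁻¹

lemma gden_pos (y : ℝ) : 0 < gden y := by unfold gden; positivity

lemma gden_eq (y : ℝ) : gden y = Real.exp y * ((1 + Real.exp y) ^ 2)⁻¹ := by
  unfold gden
  have h2 : Real.exp (y/2) * Real.exp (y/2) = Real.exp y := by
    rw [← Real.exp_add]; ring_nf
  have h3 : Real.exp (-y/2) = (Real.exp (y/2))⁻¹ := by
    rw [← Real.exp_neg]; ring_nf
  have hp := Real.exp_pos (y/2)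
  have hp2 := Real.exp_pos y
  rw [h3]
  field_simp
  linear_combination ((1 + Real.exp y)^2 - Real.exp y * (2 + Real.exp y + Real.exp (y/2)^2)) * h2

lemma hasDerivAt_G (y : ℝ) :
    HasDerivAt (fun y : ℝ => (1 + Real.exp (-y))⁻¹) (gden y) y := by
  have h1 : HasDerivAt (fun y : ℝ => 1 + Real.exp (-y)) (-Real.exp (-y)) y := by
    simpa using ((Real.hasDerivAt_exp (-y)).comp y ((hasDerivAt_id y).neg)).const_add 1
  have h2 := h1.inv (by positivity)
  refine h2.congr_deriv (Eq.symm ?_)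
  have hy : Real.exp (-y) * Real.exp y = 1 := by rw [← Real.exp_add]; simp
  rw [gden_eq]
  have h1e : (0:ℝ) < 1 + Real.exp (-y) := by positivity
  have h2e : (0:ℝ) < 1 + Real.exp y := by positivity
  field_simp
  nlinarith [hy, Real.exp_pos y, Real.exp_pos (-y)]

lemma tendsto_G_atTop : Tendsto (fun y : ℝ => (1 + Real.exp (-y))⁻¹) atTop (nhds 1) := by
  have h : Tendsto (fun y : ℝ => 1 + Real.exp (-y)) atTop (nhds 1) := by
    simpa using tendsto_exp_neg_atTop_nhds_zero.const_add 1
  simpa using h.inv₀ (by norm_num)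

lemma tail_integrableOn (t : ℝ) : IntegrableOn gden (Set.Ioi t) := by
  exact integrableOn_Ioi_deriv_of_nonneg' (fun x _ => hasDerivAt_G x)
    (fun x _ => (gden_pos x).le) tendsto_G_atTop

lemma tail_integral (t : ℝ) : ∫ x in Set.Ioi t, gden x = (1 + Real.exp t)⁻¹ := by
  rw [integral_Ioi_of_hasDerivAt_of_nonneg' (fun x _ => hasDerivAt_G x)
    (fun x _ => (gden_pos x).le) tendsto_G_atTop]
  have hy : Real.exp (-t) * Real.exp t = 1 := by rw [← Real.exp_add]; simp
  have h1e : (0:ℝ) < 1 + Real.exp (-t) := by positivity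
  have h2e : (0:ℝ) < 1 + Real.exp t := by positivity
  field_simp
  nlinarith [hy]

lemma hasDerivAt_K (y x : ℝ) :
    HasDerivAt (fun x : ℝ => -Real.log (1 + Real.exp (y - x))) ((1 + Real.exp (x - y))⁻¹) x := by
  have h1 : HasDerivAt (fun x : ℝ => 1 + Real.exp (y - x)) (-Real.exp (y - x)) x := by
    simpa using ((Real.hasDerivAt_exp (y - x)).comp x
      ((hasDerivAt_id x).const_sub y)).const_add 1
  have h2 := (h1.log (by positivity)).neg
  refine h2.congr_deriv (Eq.symm ?_)
  have hy : Real.exp (y - x) * Real.exp (x - y) = 1 := by rw [← Real.exp_add]; simp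
  have h1e : (0:ℝ) < 1 + Real.exp (y - x) := by positivity
  have h2e : (0:ℝ) < 1 + Real.exp (x - y) := by positivity
  field_simp
  linear_combination -hy

lemma tendsto_K (y : ℝ) :
    Tendsto (fun x : ℝ => -Real.log (1 + Real.exp (y - x))) atTop (nhds 0) := by
  have h1 : Tendsto (fun x : ℝ => Real.exp (y - x)) atTop (nhds 0) := by
    simpa [Function.comp_def, sub_eq_add_neg] using
      (Real.tendsto_exp_atBot.comp (tendsto_atBot_add_const_left _ y tendsto_neg_atTop_atBot))
  have h2 : Tendsto (fun x : ℝ => Real.log (1 + Real.exp (y - x))) atTop (nhds 0) := by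
    have := (Real.continuousAt_log (x := (1:ℝ)) (by norm_num)).tendsto.comp
      (by simpa using (tendsto_const_nhds.add h1 : Tendsto (fun x : ℝ => 1 + Real.exp (y - x)) atTop (nhds (1+0))))
    simpa [Function.comp_def] using this
  simpa using h2.neg

lemma inner_integrableOn (y : ℝ) :
    IntegrableOn (fun x => (1 + Real.exp (x - y))⁻¹) (Set.Ioi (0:ℝ)) :=
  integrableOn_Ioi_deriv_of_nonneg' (fun x _ => hasDerivAt_K y x)
    (fun x _ => by positivity) (tendsto_K y)

lemma inner_integral (y : ℝ) :
    ∫ x in Set.Ioi (0:ℝ), (1 + Real.exp (x - y))⁻¹ = Real.log (1 + Real.exp y) := by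
  rw [integral_Ioi_of_hasDerivAt_of_nonneg' (fun x _ => hasDerivAt_K y x)
    (fun x _ => by positivity) (tendsto_K y)]
  simp

lemma exp_mul_exp_neg (y : ℝ) : Real.exp (-y) * Real.exp y = 1 := by
  rw [← Real.exp_add]; simp

lemma log_id (y : ℝ) :
    Real.log (1 + Real.exp y) = y + Real.log (1 + Real.exp (-y)) := by
  have h : 1 + Real.exp y = Real.exp y * (1 + Real.exp (-y)) := by
    have := exp_mul_exp_neg y
    nlinarith [this]
  rw [h, Real.log_mul (Real.exp_ne_zero y) (by positivity), Real.log_exp]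

lemma g_eq_G (y : ℝ) :
    gden y = (1 - (1 + Real.exp (-y))⁻¹) * (1 + Real.exp (-y))⁻¹ := by
  rw [gden_eq]
  have hy := exp_mul_exp_neg y
  have h1 : (0:ℝ) < 1 + Real.exp (-y) := by positivity
  have h2 : (0:ℝ) < 1 + Real.exp y := by positivity
  field_simp
  nlinarith [hy, Real.exp_pos y, Real.exp_pos (-y)]

lemma hasDerivAt_L (y : ℝ) :
    HasDerivAt (fun y : ℝ => Real.log (1 + Real.exp y)) ((1 + Real.exp (-y))⁻¹) y := by
  have h1 : HasDerivAt (fun y : ℝ => 1 + Real.exp y) (Real.exp y) y := by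
    simpa using (Real.hasDerivAt_exp y).const_add 1
  have h2 := h1.log (by positivity)
  convert h2 using 1
  have hy := exp_mul_exp_neg y
  have hp1 : (0:ℝ) < 1 + Real.exp (-y) := by positivity
  have hp2 : (0:ℝ) < 1 + Real.exp y := by positivity
  field_simp
  nlinarith [hy]

lemma tendsto_log_one_exp_neg :
    Tendsto (fun y : ℝ => Real.log (1 + Real.exp (-y))) atTop (nhds 0) := by
  have := (tendsto_K 0).neg
  simpa using this

lemma hasDerivAt_H (y : ℝ) :
    HasDerivAt (fun y : ℝ => (1 + Real.exp (-y))⁻¹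
      - (1 - (1 + Real.exp (-y))⁻¹) * Real.log (1 + Real.exp y))
      (gden y * Real.log (1 + Real.exp y)) y := by
  have h := (hasDerivAt_G y).sub
    ((((hasDerivAt_G y).const_sub 1)).mul (hasDerivAt_L y))
  refine h.congr_deriv (Eq.symm ?_)
  linear_combination - g_eq_G y

lemma tendsto_H :
    Tendsto (fun y : ℝ => (1 + Real.exp (-y))⁻¹
      - (1 - (1 + Real.exp (-y))⁻¹) * Real.log (1 + Real.exp y)) atTop (nhds 1) := by
  have hEq : ∀ y : ℝ, (1 + Real.exp (-y))⁻¹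
      - (1 - (1 + Real.exp (-y))⁻¹) * Real.log (1 + Real.exp y)
      = (1 + Real.exp (-y))⁻¹
      - (y * Real.exp (-y) + Real.exp (-y) * Real.log (1 + Real.exp (-y)))
        * (1 + Real.exp (-y))⁻¹ := by
    intro y
    rw [log_id y]
    have hp : (0:ℝ) < 1 + Real.exp (-y) := by positivity
    field_simp
    ring
  have t1 : Tendsto (fun y : ℝ => y * Real.exp (-y)) atTop (nhds 0) := by
    simpa using Real.tendsto_pow_mul_exp_neg_atTop_nhds_zero 1
  have t2 : Tendsto (fun y : ℝ => Real.exp (-y)) atTop (nhds 0) :=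
    Real.tendsto_exp_neg_atTop_nhds_zero
  have t3 := tendsto_log_one_exp_neg
  have tinv : Tendsto (fun y : ℝ => (1 + Real.exp (-y))⁻¹) atTop (nhds 1) := tendsto_G_atTop
  have := tinv.sub (((t1.add (t2.mul t3)).mul tinv))
  rw [show (1:ℝ) - (0 + 0 * 0) * 1 = 1 by ring] at this
  simpa only [hEq] using this

lemma int_Ioi_phi :
    IntegrableOn (fun y => gden y * Real.log (1 + Real.exp y)) (Set.Ioi (0:ℝ)) ∧
    ∫ y in Set.Ioi (0:ℝ), gden y * Real.log (1 + Real.exp y)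
      = 1/2 + Real.log 2 / 2 := by
  have hnn : ∀ x ∈ Set.Ioi (0:ℝ), 0 ≤ gden x * Real.log (1 + Real.exp x) := by
    intro x _
    have : (0:ℝ) ≤ Real.log (1 + Real.exp x) :=
      Real.log_nonneg (by nlinarith [Real.exp_pos x])
    exact mul_nonneg (gden_pos x).le this
  refine ⟨integrableOn_Ioi_deriv_of_nonneg' (fun x _ => hasDerivAt_H x) hnn tendsto_H, ?_⟩
  rw [integral_Ioi_of_hasDerivAt_of_nonneg' (fun x _ => hasDerivAt_H x) hnn tendsto_H]
  norm_num [Real.exp_zero]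
  ring

lemma gden_neg (y : ℝ) : gden (-y) = gden y := by
  unfold gden
  rw [show -(-y)/2 = y/2 by ring, show (-y)/2 = -(y/2) by ring, add_comm]

lemma hasDerivAt_H2 (y : ℝ) :
    HasDerivAt (fun y : ℝ => (1 + Real.exp (-y))⁻¹
      * (1 + (Real.log (1 + Real.exp y) - y)))
      (gden y * Real.log (1 + Real.exp (-y))) y := by
  have h := (hasDerivAt_G y).mul
    (((hasDerivAt_L y).sub (hasDerivAt_id' y)).const_add 1)
  refine h.congr_deriv (Eq.symm ?_)
  simp only [Pi.sub_apply]
  have hid := log_id y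
  linear_combination (-(gden y)) * hid - g_eq_G y

lemma tendsto_H2 :
    Tendsto (fun y : ℝ => (1 + Real.exp (-y))⁻¹
      * (1 + (Real.log (1 + Real.exp y) - y))) atTop (nhds 1) := by
  have hEq : ∀ y : ℝ, (1 + Real.exp (-y))⁻¹ * (1 + (Real.log (1 + Real.exp y) - y))
      = (1 + Real.exp (-y))⁻¹ * (1 + Real.log (1 + Real.exp (-y))) := by
    intro y; rw [log_id y]; ring
  have := tendsto_G_atTop.mul ((tendsto_const_nhds : Tendsto (fun _ : ℝ => (1:ℝ)) atTop (nhds 1)).add tendsto_log_one_exp_neg)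
  rw [show (1:ℝ) * (1 + 0) = 1 by ring] at this
  simpa only [hEq] using this

lemma int_Ioi_psi :
    IntegrableOn (fun y => gden y * Real.log (1 + Real.exp (-y))) (Set.Ioi (0:ℝ)) ∧
    ∫ y in Set.Ioi (0:ℝ), gden y * Real.log (1 + Real.exp (-y))
      = 1/2 - Real.log 2 / 2 := by
  have hnn : ∀ x ∈ Set.Ioi (0:ℝ), 0 ≤ gden x * Real.log (1 + Real.exp (-x)) := by
    intro x _
    exact mul_nonneg (gden_pos x).le (Real.log_nonneg (by nlinarith [Real.exp_pos (-x)]))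
  refine ⟨integrableOn_Ioi_deriv_of_nonneg' (fun x _ => hasDerivAt_H2 x) hnn tendsto_H2, ?_⟩
  rw [integral_Ioi_of_hasDerivAt_of_nonneg' (fun x _ => hasDerivAt_H2 x) hnn tendsto_H2]
  norm_num [Real.exp_zero]
  ring

lemma phi_neg (y : ℝ) :
    gden (-y) * Real.log (1 + Real.exp (-y)) = gden y * Real.log (1 + Real.exp (-y)) := by
  rw [gden_neg]

lemma int_Iic_phi :
    IntegrableOn (fun y => gden y * Real.log (1 + Real.exp y)) (Set.Iic (0:ℝ)) ∧
    ∫ y in Set.Iic (0:ℝ), gden y * Real.log (1 + Real.exp y)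
      = 1/2 - Real.log 2 / 2 := by
  set φ : ℝ → ℝ := fun y => gden y * Real.log (1 + Real.exp y) with hφ
  have hcomp : ∀ y : ℝ, φ (-y) = gden y * Real.log (1 + Real.exp (-y)) := by
    intro y; simp only [hφ, gden_neg]
  constructor
  · have m : MeasurableEmbedding fun x : ℝ => -x :=
      (Homeomorph.neg ℝ).measurableEmbedding
    rw [show (volume : Measure ℝ) = Measure.map (fun x : ℝ => -x) volume from
      (Measure.map_neg_eq_self _).symm]
    rw [m.integrableOn_map_iff]
    have : ((fun x : ℝ => -x) ⁻¹' Set.Iic 0) = Set.Ici (0:ℝ) := by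
      ext x; simp
    rw [this]
    have h := int_Ioi_psi.1
    refine (integrableOn_Ici_iff_integrableOn_Ioi).mpr ?_
    exact h.congr_fun (fun x _ => (hcomp x).symm) measurableSet_Ioi
  · have h := integral_comp_neg_Ioi 0 φ
    rw [neg_zero] at h
    rw [← h]
    rw [show (∫ x in Set.Ioi (0:ℝ), φ (-x))
        = ∫ x in Set.Ioi (0:ℝ), gden x * Real.log (1 + Real.exp (-x)) from
      setIntegral_congr_fun measurableSet_Ioi (fun x _ => hcomp x)]
    exact int_Ioi_psi.2

lemma phi_integrable :
    Integrable (fun y => gden y * Real.log (1 + Real.exp y)) := by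
  rw [← integrableOn_univ, ← Set.Iic_union_Ioi (a := (0:ℝ))]
  exact int_Iic_phi.1.union int_Ioi_phi.1

lemma phi_integral :
    ∫ y, gden y * Real.log (1 + Real.exp y) = 1 := by
  rw [← intervalIntegral.integral_Iic_add_Ioi int_Iic_phi.1 int_Ioi_phi.1, int_Iic_phi.2, int_Ioi_phi.2]
  ring

lemma gden_measurable : Measurable gden := by
  apply Measurable.inv
  apply Measurable.pow_const
  exact ((Real.continuous_exp.comp (continuous_id.div_const 2)).add
    (Real.continuous_exp.comp ((continuous_id.neg).div_const 2))).measurable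

lemma inner_measurable (y : ℝ) :
    Measurable fun x : ℝ => ENNReal.ofReal (1 + Real.exp (x - y))⁻¹ := by
  apply Measurable.ennreal_ofReal
  exact ((continuous_const.add (Real.continuous_exp.comp
    (continuous_id.sub continuous_const))).measurable).inv

instance : SFinite logisticMeasure := by unfold logisticMeasure; infer_instance

lemma logistic_apply_Ioi (t : ℝ) :
    logisticMeasure (Set.Ioi t) = ENNReal.ofReal (1 + Real.exp t)⁻¹ := by
  rw [logisticMeasure, withDensity_apply _ measurableSet_Ioi]
  have h := ofReal_integral_eq_lintegral_ofReal (tail_integrableOn t)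
    (ae_of_all _ fun x => (gden_pos x).le)
  rw [tail_integral] at h
  exact h.symm

lemma lin_inner (y : ℝ) :
    ∫⁻ x in Set.Ioi (0:ℝ), ENNReal.ofReal (gden y * (1 + Real.exp (x - y))⁻¹)
      = ENNReal.ofReal (gden y * Real.log (1 + Real.exp y)) := by
  simp_rw [ENNReal.ofReal_mul (gden_pos y).le]
  rw [lintegral_const_mul _ (inner_measurable y)]
  rw [← ofReal_integral_eq_lintegral_ofReal (inner_integrableOn y)
    (ae_of_all _ fun x => by positivity), inner_integral]

lemma lin_total :
    ∫⁻ y, ENNReal.ofReal (gden y * Real.log (1 + Real.exp y)) = 1 := by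
  rw [← ofReal_integral_eq_lintegral_ofReal phi_integrable
    (ae_of_all _ fun y => mul_nonneg (gden_pos y).le
      (Real.log_nonneg (by nlinarith [Real.exp_pos y]))), phi_integral,
    ENNReal.ofReal_one]

lemma uncurry_measurable :
    Measurable (Function.uncurry fun x y : ℝ =>
      ENNReal.ofReal (gden y * (1 + Real.exp (x - y))⁻¹)) := by
  apply Measurable.ennreal_ofReal
  apply Measurable.mul
  · exact gden_measurable.comp measurable_snd
  · exact (((continuous_const.add (Real.continuous_exp.comp
      (continuous_fst.sub continuous_snd))).measurable)).inv

lemma inner_measurable' (x : ℝ) :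
    Measurable fun y : ℝ => ENNReal.ofReal (1 + Real.exp (x - y))⁻¹ := by
  apply Measurable.ennreal_ofReal
  exact ((continuous_const.add (Real.continuous_exp.comp
    (continuous_const.sub continuous_id))).measurable).inv

theorem tail_of_sum_indep_logistic_is_density
    {Ω : Type*} [MeasureSpace Ω] (P : Measure Ω) [IsProbabilityMeasure P]
    (X₁ X₂ : Ω → ℝ) (hm₁ : Measurable X₁) (hm₂ : Measurable X₂)
    (hindep : IndepFun X₁ X₂ P)
    (h₁ : Measure.map X₁ P = logisticMeasure)
    (h₂ : Measure.map X₂ P = logisticMeasure) :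
    ∫ x in Set.Ioi (0 : ℝ), (P {ω | x < X₁ ω + X₂ ω}).toReal = 1 := by
  have hset : ∀ x : ℝ, MeasurableSet {p : ℝ × ℝ | x < p.1 + p.2} := fun x =>
    measurableSet_lt measurable_const (measurable_fst.add measurable_snd)
  have hmap : Measure.map (fun ω => (X₁ ω, X₂ ω)) P = logisticMeasure.prod logisticMeasure := by
    rw [(indepFun_iff_map_prod_eq_prod_map_map hm₁.aemeasurable hm₂.aemeasurable).mp hindep,
      h₁, h₂]
  have hP : ∀ x : ℝ, P {ω | x < X₁ ω + X₂ ω}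
      = (logisticMeasure.prod logisticMeasure) {p : ℝ × ℝ | x < p.1 + p.2} := by
    intro x
    rw [← hmap, Measure.map_apply (hm₁.prodMk hm₂) (hset x)]
    rfl
  have hprod : ∀ x : ℝ, (logisticMeasure.prod logisticMeasure) {p : ℝ × ℝ | x < p.1 + p.2}
      = ∫⁻ y, ENNReal.ofReal (gden y * (1 + Real.exp (x - y))⁻¹) := by
    intro x
    rw [Measure.prod_apply (hset x)]
    have hsec : ∀ y : ℝ, (Prod.mk y ⁻¹' {p : ℝ × ℝ | x < p.1 + p.2}) = Set.Ioi (x - y) := by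
      intro y; ext z; simp [Set.mem_Ioi, sub_lt_iff_lt_add']
    simp_rw [hsec, logistic_apply_Ioi]
    have hdm : Measurable fun x : ℝ =>
        ENNReal.ofReal ((Real.exp (x / 2) + Real.exp (-x / 2)) ^ 2)⁻¹ :=
      gden_measurable.ennreal_ofReal
    rw [logisticMeasure, lintegral_withDensity_eq_lintegral_mul _ hdm (inner_measurable' x)]
    refine lintegral_congr fun y => ?_
    show ENNReal.ofReal (gden y) * ENNReal.ofReal ((1 + Real.exp (x - y))⁻¹) = _
    rw [← ENNReal.ofReal_mul (gden_pos y).le]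
  have hPF : ∀ x : ℝ, P {ω | x < X₁ ω + X₂ ω}
      = ∫⁻ y, ENNReal.ofReal (gden y * (1 + Real.exp (x - y))⁻¹) := fun x => by
    rw [hP x, hprod x]
  have hFmeas : Measurable fun x : ℝ =>
      ∫⁻ y, ENNReal.ofReal (gden y * (1 + Real.exp (x - y))⁻¹) :=
    Measurable.lintegral_prod_right uncurry_measurable
  calc ∫ x in Set.Ioi (0:ℝ), (P {ω | x < X₁ ω + X₂ ω}).toReal
      = ∫ x in Set.Ioi (0:ℝ),
          (∫⁻ y, ENNReal.ofReal (gden y * (1 + Real.exp (x - y))⁻¹)).toReal := by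
        refine setIntegral_congr_fun measurableSet_Ioi fun x _ => ?_
        rw [hPF x]
    _ = 1 := by
        rw [integral_toReal (hFmeas.aemeasurable)
          (ae_of_all _ fun x => by rw [← hPF x]; exact measure_lt_top P _)]
        have hswap : (∫⁻ x in Set.Ioi (0:ℝ),
              ∫⁻ y, ENNReal.ofReal (gden y * (1 + Real.exp (x - y))⁻¹))
            = ∫⁻ y, ∫⁻ x in Set.Ioi (0:ℝ),
                ENNReal.ofReal (gden y * (1 + Real.exp (x - y))⁻¹) :=
          lintegral_lintegral_swap (uncurry_measurable.aemeasurable)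
        rw [hswap, lintegral_congr fun y => lin_inner y, lin_total]
        simp
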